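/- Let t₀ < t₁ be real numbers, let m : [t₀, t₁] → (0, ∞) be continuous, and let c : [t₀, t₁) → ℝ be differentiable with c'(t)² ≤ (1 + c(t)²)/m(t) for all t. Then c is bounded on [t₀, t₁). -/

import Mathlib

open Real Set

lemma gronwallBound_mono_time {δ K ε x y : ℝ} (hδ : 0 ≤ δ) (hK : 0 < K) (hε : 0 ≤ ε)
    (hxy : x ≤ y) : gronwallBound δ K ε x ≤ gronwallBound δ K ε y := by
  rw [gronwallBound_of_K_ne_0 hK.ne']
  have h : Real.exp (K * x) ≤ Real.exp (K * y) := by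
    apply Real.exp_le_exp.2; nlinarith
  have hεK : 0 ≤ ε / K := div_nonneg hε hK.le
  dsimp only
  nlinarith

/-- A curve `c` on `[t₀, t₁)` with `c'(t)² ≤ (1 + c(t)²)/m(t)`, where `m` is
continuous and positive on `[t₀, t₁]`, remains bounded on `[t₀, t₁)`. -/
theorem causal_curve_bounded (t₀ t₁ : ℝ) (ht : t₀ < t₁)
    (m : ℝ → ℝ) (hm : ContinuousOn m (Icc t₀ t₁)) (hmpos : ∀ t ∈ Icc t₀ t₁, 0 < m t)
    (c c' : ℝ → ℝ)
    (hderiv : ∀ t ∈ Ico t₀ t₁, HasDerivAt c (c' t) t)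
    (hbound : ∀ t ∈ Ico t₀ t₁, (c' t) ^ 2 ≤ (1 + (c t) ^ 2) / m t) :
    ∃ B : ℝ, ∀ t ∈ Ico t₀ t₁, |c t| ≤ B := by
  -- minimum of m
  obtain ⟨s₀, hs₀, hmin⟩ := isCompact_Icc.exists_isMinOn ⟨t₀, by simp [ht.le]⟩ hm
  set m₀ := m s₀ with hm₀def
  have hm₀ : 0 < m₀ := hmpos s₀ hs₀
  set S := Real.sqrt m₀ with hSdef
  have hS : 0 < S := Real.sqrt_pos.2 hm₀
  set K := 1 / S with hKdef
  have hK : 0 < K := by positivity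
  set δ := |c t₀| with hδdef
  refine ⟨gronwallBound δ K K (t₁ - t₀), ?_⟩
  intro t htmem
  obtain ⟨ht0, ht1⟩ := htmem
  have hsub : Icc t₀ t ⊆ Ico t₀ t₁ := fun s hs => ⟨hs.1, lt_of_le_of_lt hs.2 ht1⟩
  have hcont : ContinuousOn c (Icc t₀ t) := fun s hs =>
    ((hderiv s (hsub hs)).continuousAt).continuousWithinAt
  have key := norm_le_gronwallBound_of_norm_deriv_right_le (f := c) (f' := c')
    (δ := δ) (K := K) (ε := K) (a := t₀) (b := t) hcont
    (fun s hs => (hderiv s (hsub (Ico_subset_Icc_self hs))).hasDerivWithinAt)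
    (le_of_eq rfl)
    ?_ t ⟨ht0, le_refl t⟩
  · refine le_trans key (gronwallBound_mono_time (abs_nonneg _) hK hK.le (by linarith))
  · intro s hs
    have hsIco : s ∈ Ico t₀ t₁ := hsub (Ico_subset_Icc_self hs)
    have hb := hbound s hsIco
    have hms : m₀ ≤ m s := hmin ⟨hsIco.1, hsIco.2.le⟩
    have h1 : (c' s) ^ 2 ≤ (1 + (c s) ^ 2) / m₀ := by
      refine hb.trans (div_le_div_of_nonneg_left (by positivity) hm₀ hms)
    have h2 : |c' s| ≤ Real.sqrt ((1 + (c s) ^ 2) / m₀) := by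
      rw [← Real.sqrt_sq_eq_abs]
      exact Real.sqrt_le_sqrt h1
    have h3 : Real.sqrt ((1 + (c s) ^ 2) / m₀) = Real.sqrt (1 + (c s) ^ 2) / S := by
      rw [Real.sqrt_div (by positivity)]
    have h4 : Real.sqrt (1 + (c s) ^ 2) ≤ 1 + |c s| := by
      rw [show (1 : ℝ) + |c s| = Real.sqrt ((1 + |c s|) ^ 2) by
        rw [Real.sqrt_sq (by positivity)]]
      apply Real.sqrt_le_sqrt
      have := abs_nonneg (c s)
      have := sq_abs (c s)
      nlinarith
    have h5 : (1 + |c s|) / S = K * |c s| + K := by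
      field_simp [hKdef]
      have hSK : S * K = 1 := by rw [hKdef]; field_simp
      linear_combination (-(1 + |c s|)) * hSK
    calc ‖c' s‖ = |c' s| := Real.norm_eq_abs _
      _ ≤ Real.sqrt (1 + (c s) ^ 2) / S := by rw [← h3]; exact h2
      _ ≤ (1 + |c s|) / S := by gcongr
      _ = K * ‖c s‖ + K := by rw [h5, Real.norm_eq_abs]
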